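/- arXiv:math/0702160 — 2 statements merged into one kernel-verified Lean document; each statement's English description precedes it below -/
import Mathlib

section
/- Let p be a prime number. The p-adic exponential series has positive radius of convergence, with the explicit bound: for every x in the field ℚ_p of p-adic numbers with ‖x‖_p < p^(−1/(p−1)), the series Σ_{n=0}^∞ xⁿ/n! converges in ℚ_p (i.e. the family n ↦ xⁿ/n! is summable). -/
theorem padic_exp_series_converges
    (p : ℕ) [Fact p.Prime] (x : ℚ_[p])
    (hx : ‖x‖ < (p : ℝ) ^ (-(1 : ℝ) / (p - 1))) :
    Summable (fun n : ℕ => x ^ n / (n.factorial : ℚ_[p])) := by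
  have hp : p.Prime := Fact.out
  have hp1 : (1 : ℝ) < (p : ℝ) := by exact_mod_cast hp.one_lt
  have hp0 : (0 : ℝ) < (p : ℝ) := by linarith
  have hpm1 : (0 : ℝ) < (p : ℝ) - 1 := by linarith
  set c : ℝ := (p : ℝ) ^ ((1 : ℝ) / (p - 1)) with hc
  have hcpos : 0 < c := Real.rpow_pos_of_pos hp0 _
  set r : ℝ := ‖x‖ * c with hr
  have hr0 : 0 ≤ r := mul_nonneg (norm_nonneg _) hcpos.le
  have hr1 : r < 1 := by
    have := mul_lt_mul_of_pos_right hx hcpos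
    rwa [← Real.rpow_add hp0, neg_div, neg_add_cancel, Real.rpow_zero] at this
  apply Summable.of_norm_bounded (summable_geometric_of_lt_one hr0 hr1)
  intro n
  have hfac : ((n.factorial : ℚ_[p])) ≠ 0 := by
    exact_mod_cast n.factorial_ne_zero
  have hv : ‖(n.factorial : ℚ_[p])‖ = (p : ℝ) ^ (-(padicValNat p n.factorial : ℤ)) := by
    rw [Padic.norm_eq_zpow_neg_valuation hfac, Padic.valuation_natCast]
  have hval : ((padicValNat p n.factorial : ℝ)) ≤ n / ((p : ℝ) - 1) := by
    have h := sub_one_mul_padicValNat_factorial (p := p) n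
    have h2 : (p - 1) * padicValNat p n.factorial ≤ n := by
      rw [h]; exact Nat.sub_le _ _
    have h3 : ((p : ℝ) - 1) * (padicValNat p n.factorial : ℝ) ≤ n := by
      have := (Nat.cast_le (α := ℝ)).mpr h2
      push_cast [Nat.cast_sub hp.one_le] at this
      linarith
    rw [le_div_iff₀ hpm1]; linarith
  calc ‖x ^ n / (n.factorial : ℚ_[p])‖
      = ‖x‖ ^ n * (p : ℝ) ^ ((padicValNat p n.factorial : ℤ)) := by
        rw [norm_div, norm_pow, hv, div_eq_mul_inv, ← zpow_neg, neg_neg]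
    _ ≤ ‖x‖ ^ n * c ^ n := by
        apply mul_le_mul_of_nonneg_left _ (pow_nonneg (norm_nonneg _) n)
        rw [← Real.rpow_intCast, ← Real.rpow_natCast c n, hc, ← Real.rpow_mul hp0.le]
        apply Real.rpow_le_rpow_of_exponent_le hp1.le
        rw [Int.cast_natCast]
        calc ((padicValNat p n.factorial : ℝ)) ≤ n / ((p:ℝ) - 1) := hval
          _ = 1 / ((p:ℝ) - 1) * n := by ring
    _ = r ^ n := by rw [hr, mul_pow]
end

section
/- Let A be a real Banach algebra and let D be a continuous linear derivation on A, i.e. a bounded linear map D : A → A satisfying D(ab) = D(a)·b + a·D(b) for all a, b ∈ A. Then the exponential exp(D) is an algebra automorphism of A; in particular, exp(D)(a·b) = exp(D)(a) · exp(D)(b) for all a, b ∈ A, and exp(D) is invertible with inverse exp(−D). -/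
open NormedSpace Finset in
private lemma pow_leibniz
    {A : Type*} [NormedRing A] [NormedAlgebra ℝ A]
    (D : A →L[ℝ] A) (hD : ∀ a b : A, D (a * b) = D a * b + a * D b)
    (a b : A) : ∀ n : ℕ, (D ^ n) (a * b) =
      ∑ k ∈ range (n + 1), n.choose k • ((D ^ k) a * (D ^ (n - k)) b) := by
  intro n
  induction n with
  | zero => simp
  | succ n ih =>
    rw [pow_succ', ContinuousLinearMap.mul_apply, ih, map_sum]
    have step : ∀ k ∈ range (n + 1),
        D (n.choose k • ((D ^ k) a * (D ^ (n - k)) b)) =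
          n.choose k • ((D ^ (k + 1)) a * (D ^ (n - k)) b) +
          n.choose k • ((D ^ k) a * (D ^ (n + 1 - k)) b) := by
      intro k hk
      have hk' : k ≤ n := Nat.lt_succ_iff.mp (mem_range.mp hk)
      rw [map_nsmul, hD, smul_add]
      congr 2
      · rw [← ContinuousLinearMap.mul_apply, ← pow_succ']
      · have h : n + 1 - k = n - k + 1 := by omega
        rw [h, ← ContinuousLinearMap.mul_apply, ← pow_succ']
    rw [sum_congr rfl step, sum_add_distrib]
    have h2 : (∑ k ∈ range (n + 1), n.choose k • ((D ^ k) a * (D ^ (n + 1 - k)) b))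
        = (∑ k ∈ range (n + 1), n.choose (k + 1) • ((D ^ (k + 1)) a * (D ^ (n - k)) b))
          + a * (D ^ (n + 1)) b := by
      rw [Finset.sum_range_succ' _ n, Finset.sum_range_succ _ n]
      simp [Nat.add_sub_add_right, Nat.choose_succ_self]
    rw [h2, ← add_assoc, ← Finset.sum_add_distrib]
    rw [Finset.sum_range_succ' _ (n + 1)]
    simp [Nat.choose_succ_succ, Nat.add_sub_add_right, add_nsmul, add_mul]

open NormedSpace in
theorem exp_of_derivation_is_automorphism
    (A : Type*) [NormedRing A] [NormedAlgebra ℝ A] [CompleteSpace A]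
    (D : A →L[ℝ] A) (hD : ∀ a b : A, D (a * b) = D a * b + a * D b) :
    (∀ a b : A, NormedSpace.exp D (a * b) =
        NormedSpace.exp D a * NormedSpace.exp D b) ∧
    NormedSpace.exp D * NormedSpace.exp (-D) = 1 ∧
    NormedSpace.exp (-D) * NormedSpace.exp D = 1 := by
  refine ⟨?_, ?_, ?_⟩
  · intro a b
    have happ : ∀ x : A, exp D x = ∑' n : ℕ, (n.factorial⁻¹ : ℝ) • (D ^ n) x := by
      intro x
      rw [exp_eq_tsum ℝ]
      have := (ContinuousLinearMap.apply ℝ A x).map_tsum (expSeries_summable' (𝕂 := ℝ) D)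
      simpa using this
    have hpow : ∀ (x : A) (n : ℕ), ‖(D ^ n) x‖ ≤ ‖D‖ ^ n * ‖x‖ := by
      intro x n
      induction n with
      | zero => simp
      | succ n ih =>
        rw [pow_succ', ContinuousLinearMap.mul_apply]
        calc ‖D ((D ^ n) x)‖ ≤ ‖D‖ * ‖(D ^ n) x‖ := D.le_opNorm _
          _ ≤ ‖D‖ * (‖D‖ ^ n * ‖x‖) :=
            mul_le_mul_of_nonneg_left ih (norm_nonneg D)
          _ = ‖D‖ ^ (n + 1) * ‖x‖ := by ring
    have hsum : ∀ x : A, Summable fun n : ℕ => ‖(n.factorial⁻¹ : ℝ) • (D ^ n) x‖ := by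
      intro x
      refine Summable.of_nonneg_of_le (fun n => norm_nonneg _) (fun n => ?_)
        ((Real.summable_pow_div_factorial ‖D‖).mul_right ‖x‖)
      rw [norm_smul, norm_inv, Real.norm_natCast]
      calc (n.factorial : ℝ)⁻¹ * ‖(D ^ n) x‖
          ≤ (n.factorial : ℝ)⁻¹ * (‖D‖ ^ n * ‖x‖) := by
            apply mul_le_mul_of_nonneg_left (hpow x n)
            positivity
        _ = ‖D‖ ^ n / n.factorial * ‖x‖ := by ring
    rw [happ, happ, happ]
    rw [tsum_mul_tsum_eq_tsum_sum_antidiagonal_of_summable_norm (hsum a) (hsum b)]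
    refine tsum_congr fun n => ?_
    rw [pow_leibniz D hD a b n, Finset.smul_sum,
      Finset.Nat.sum_antidiagonal_eq_sum_range_succ_mk]
    refine Finset.sum_congr rfl fun k hk => ?_
    rw [smul_mul_smul_comm, ← Nat.cast_smul_eq_nsmul ℝ, smul_smul]
    congr 1
    have hk' : k ≤ n := Nat.lt_succ_iff.mp (Finset.mem_range.mp hk)
    rw [Nat.cast_choose ℝ hk']
    have h1 : (k.factorial : ℝ) ≠ 0 := Nat.cast_ne_zero.mpr k.factorial_ne_zero
    have h2 : ((n - k).factorial : ℝ) ≠ 0 := Nat.cast_ne_zero.mpr (n - k).factorial_ne_zero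
    have h3 : (n.factorial : ℝ) ≠ 0 := Nat.cast_ne_zero.mpr n.factorial_ne_zero
    field_simp
  · let +nondep : NormedAlgebra ℚ (A →L[ℝ] A) := .restrictScalars ℚ ℝ (A →L[ℝ] A)
    rw [← exp_add_of_commute ((Commute.refl D).neg_right)]
    simp [exp_zero]
  · let +nondep : NormedAlgebra ℚ (A →L[ℝ] A) := .restrictScalars ℚ ℝ (A →L[ℝ] A)
    rw [← exp_add_of_commute ((Commute.refl D).neg_left)]
    simp [exp_zero]
end
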